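/- Let C ⊆ R^S be defined by pairwise difference constraints: C = {v : sp(v) ≤ 2·sp(h*), |V-ref(s)-V-ref(s') - (v(s)-v(s'))| ≤ w_{(s,s')} ∀(s,s')}. Assume C is nonempty. Define Proj_C(v) as the (pointwise) maximum element of L(v) = {v' ∈ C : v' ≤ v}, assuming L(v) is nonempty. Then Proj_C is well defined (L(v) has a pointwise maximum lying in C), Proj_C(v) = v for v ∈ C, and Proj_C is monotone: v1 ≥ v2 implies Proj_C(v1) ≥ Proj_C(v2). -/
import Mathlib


open Finset

/-- The projection onto the confidence region `C` is well defined: for every `v` with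
`L(v) = {v' ∈ C : v' ≤ v}` nonempty, `L(v)` has a pointwise greatest element (lying in `C`);
this greatest element equals `v` when `v ∈ C`, and the projection is monotone. -/
theorem stmt8 {S : Type*} [Fintype S] [Nonempty S]
    (Vref : S → ℝ) (w : S → S → ℝ) (hw : ∀ s s', 0 ≤ w s s') (hstar : S → ℝ)
    (C : Set (S → ℝ))
    (hC : C = {v | (univ.sup' univ_nonempty v - univ.inf' univ_nonempty v
        ≤ 2 * (univ.sup' univ_nonempty hstar - univ.inf' univ_nonempty hstar)) ∧
      ∀ s s', |Vref s - Vref s' - (v s - v s')| ≤ w s s'})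
    (hne : C.Nonempty) :
    (∀ v : S → ℝ, {v' | v' ∈ C ∧ v' ≤ v}.Nonempty →
      ∃ u, u ∈ C ∧ u ≤ v ∧ ∀ v' ∈ C, v' ≤ v → v' ≤ u) ∧
    (∀ v ∈ C, ∀ u, (u ∈ C ∧ u ≤ v ∧ ∀ v' ∈ C, v' ≤ v → v' ≤ u) → u = v) ∧
    (∀ v₁ v₂ u₁ u₂ : S → ℝ, v₂ ≤ v₁ →
      (u₁ ∈ C ∧ u₁ ≤ v₁ ∧ ∀ v' ∈ C, v' ≤ v₁ → v' ≤ u₁) →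
      (u₂ ∈ C ∧ u₂ ≤ v₂ ∧ ∀ v' ∈ C, v' ≤ v₂ → v' ≤ u₂) → u₂ ≤ u₁) := by
  have hCprop : ∀ x, x ∈ C →
      (univ.sup' univ_nonempty x - univ.inf' univ_nonempty x
        ≤ 2 * (univ.sup' univ_nonempty hstar - univ.inf' univ_nonempty hstar)) ∧
      ∀ s s', |Vref s - Vref s' - (x s - x s')| ≤ w s s' := by
    intro x hx; rwa [hC] at hx
  refine ⟨?_, ?_, ?_⟩
  · intro v hLv
    obtain ⟨v₀, hv₀C, hv₀le⟩ := hLv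
    have hbdd : ∀ s, BddAbove ((fun v' => v' s) '' {v' | v' ∈ C ∧ v' ≤ v}) := by
      intro s
      exact ⟨v s, by rintro x ⟨v', ⟨_, hle⟩, rfl⟩; exact hle s⟩
    have hne' : ∀ s, ((fun v' => v' s) '' {v' | v' ∈ C ∧ v' ≤ v}).Nonempty :=
      fun s => ⟨v₀ s, v₀, ⟨hv₀C, hv₀le⟩, rfl⟩
    set u : S → ℝ := fun s => sSup ((fun v' => v' s) '' {v' | v' ∈ C ∧ v' ≤ v}) with hu
    have hmax : ∀ v' ∈ C, v' ≤ v → v' ≤ u := by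
      intro v' hv' hle s
      exact le_csSup (hbdd s) ⟨v', ⟨hv', hle⟩, rfl⟩
    have huv : u ≤ v := fun s =>
      csSup_le (hne' s) (by rintro x ⟨v', ⟨_, hle⟩, rfl⟩; exact hle s)
    have hsuple : ∀ (s : S) (c : ℝ), (∀ v' ∈ C, v' ≤ v → v' s ≤ c) → u s ≤ c := by
      intro s c h
      exact csSup_le (hne' s) (by rintro x ⟨v', ⟨h1, h2⟩, rfl⟩; exact h v' h1 h2)
    refine ⟨u, ?_, huv, hmax⟩
    rw [hC]
    refine ⟨?_, ?_⟩
    · obtain ⟨s₀, -, hs₀⟩ := Finset.exists_mem_eq_sup' univ_nonempty u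
      obtain ⟨s₁, -, hs₁⟩ := Finset.exists_mem_eq_inf' univ_nonempty u
      rw [hs₀, hs₁]
      have h0 : u s₀ ≤ 2 * (univ.sup' univ_nonempty hstar - univ.inf' univ_nonempty hstar)
          + u s₁ := by
        apply hsuple
        intro v' hv' hle
        have h1 : v' s₀ ≤ univ.sup' univ_nonempty v' := Finset.le_sup' v' (mem_univ s₀)
        have h2 : univ.inf' univ_nonempty v' ≤ v' s₁ := Finset.inf'_le v' (mem_univ s₁)
        have h3 := (hCprop v' hv').1
        have h4 : v' s₁ ≤ u s₁ := hmax v' hv' hle s₁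
        linarith
      linarith
    · intro s s'
      rw [abs_le]
      have h1 : u s ≤ (Vref s - Vref s' + w s s') + u s' := by
        apply hsuple
        intro v' hv' hle
        have h3 := abs_le.mp ((hCprop v' hv').2 s s')
        have h4 : v' s' ≤ u s' := hmax v' hv' hle s'
        linarith [h3.1]
      have h2 : u s' ≤ (w s s' - (Vref s - Vref s')) + u s := by
        apply hsuple
        intro v' hv' hle
        have h3 := abs_le.mp ((hCprop v' hv').2 s s')
        have h4 : v' s ≤ u s := hmax v' hv' hle s
        linarith [h3.2]
      constructor <;> linarith
  · rintro v hv u ⟨huC, huv, hmaxu⟩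
    exact le_antisymm huv (hmaxu v hv le_rfl)
  · rintro v₁ v₂ u₁ u₂ h21 ⟨-, -, hm1⟩ ⟨h2C, h2le, -⟩
    exact hm1 u₂ h2C (h2le.trans h21)
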